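/- Let p ∈ ℕ and let s ≥ 1 be a natural number such that i ⊕ s = i + s for every i with 0 ≤ i ≤ p. Then for every j with 0 ≤ j ≤ p, the set {j ⊕ i : i = 0, 1, ..., s−1} equals the set {0, 1, ..., s−1}. -/

import Mathlib

theorem stmt_13 (p s : ℕ) (hs : 1 ≤ s) (hxor : ∀ i ≤ p, i ^^^ s = i + s)
    (j : ℕ) (hj : j ≤ p) :
    (fun i => j ^^^ i) '' Set.Iio s = Set.Iio s := by
  -- any bit of s is above p
  have hbit : ∀ c, s.testBit c = true → p < 2 ^ c := by
    intro c hc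
    by_contra h
    push_neg at h
    have heq := hxor (2 ^ c) h
    have hlt : 2 ^ c ^^^ s < s := by
      apply Nat.lt_of_testBit c
      · simp [Nat.testBit_xor, hc]
      · exact hc
      · intro k hk
        simp [Nat.testBit_xor, Nat.testBit_two_pow_of_ne (Nat.ne_of_lt hk)]
    have hpos : 0 < 2 ^ c := Nat.two_pow_pos c
    rw [heq] at hlt
    omega
  have hsne : s ≠ 0 := by omega
  have hex : ∃ i, s.testBit i = true := by
    simpa using Nat.exists_testBit_of_ne_zero hsne
  classical
  let c := Nat.find hex
  have hcs : s.testBit c = true := Nat.find_spec hex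
  have hclow : ∀ b < c, s.testBit b = false := by
    intro b hb
    have := Nat.find_min hex hb
    simpa using this
  have hjlt : j < 2 ^ c := lt_of_le_of_lt hj (hbit c hcs)
  have hsmod : s % 2 ^ c = 0 := by
    apply Nat.zero_of_testBit_eq_false
    intro i
    rw [Nat.testBit_mod_two_pow]
    rcases lt_or_ge i c with h | h
    · simp [hclow i h]
    · simp [Nat.not_lt.mpr h]
  have key : ∀ x < s, j ^^^ x < s := by
    intro x hx
    have hdiv : (j ^^^ x) / 2 ^ c = x / 2 ^ c := by
      rw [← Nat.shiftRight_eq_div_pow, ← Nat.shiftRight_eq_div_pow]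
      apply Nat.eq_of_testBit_eq
      intro b
      have hjb : j.testBit (c + b) = false :=
        Nat.testBit_lt_two_pow (lt_of_lt_of_le hjlt (Nat.pow_le_pow_right (by norm_num) (by omega)))
      simp [Nat.testBit_shiftRight, Nat.testBit_xor, hjb]
    have hdvd : 2 ^ c ∣ s := Nat.dvd_of_mod_eq_zero hsmod
    have hq : x / 2 ^ c < s / 2 ^ c := Nat.div_lt_div_of_lt_of_dvd hdvd hx
    have h1 : (j ^^^ x) = x / 2 ^ c * 2 ^ c + (j ^^^ x) % 2 ^ c := by
      rw [← hdiv]; exact (Nat.div_add_mod' _ _).symm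
    have h2 : (j ^^^ x) % 2 ^ c < 2 ^ c := Nat.mod_lt _ (Nat.two_pow_pos c)
    have h3 : s / 2 ^ c * 2 ^ c = s := Nat.div_mul_cancel hdvd
    calc j ^^^ x = x / 2 ^ c * 2 ^ c + (j ^^^ x) % 2 ^ c := h1
      _ < (x / 2 ^ c + 1) * 2 ^ c := by nlinarith
      _ ≤ s / 2 ^ c * 2 ^ c := Nat.mul_le_mul_right _ (by omega)
      _ = s := h3
  ext x
  simp only [Set.mem_image, Set.mem_Iio]
  constructor
  · rintro ⟨i, hi, rfl⟩
    exact key i hi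
  · intro hx
    exact ⟨j ^^^ x, key x hx, Nat.xor_xor_cancel_left j x⟩
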